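/- For all natural numbers n, r, s, k, there exists an r-colouring of E(K_n) such that every connected subgraph using at most s colours has at most (s+1)·⌈n/⌊√(2r)⌋⌉ vertices; hence m(n,r,s,k) ≤ (s+1)·⌈n/⌊√(2r)⌋⌉. -/

import Mathlib

/-- code for an unordered pair of naturals -/
def codeN (i j : ℕ) : ℕ := (max i j) * (max i j - 1) / 2 + min i j

lemma codeN_comm (i j : ℕ) : codeN i j = codeN j i := by
  simp [codeN, Nat.max_comm, Nat.min_comm]

lemma two_mul_tri (j : ℕ) : 2 * (j * (j - 1) / 2) = j * (j - 1) := by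
  rcases j with _ | m
  · simp
  · have : Even ((m+1) * m) := by
      simpa [Nat.mul_comm] using Nat.even_mul_succ_self m
    simpa using Nat.mul_div_cancel' this.two_dvd

lemma tri_add (j : ℕ) : (j*(j-1))/2 + j = ((j+1)*j)/2 := by
  have h1 := two_mul_tri j
  have h2 := two_mul_tri (j+1)
  have h3 : (j+1) * ((j+1) - 1) = (j+1)*j := by simp
  have h4 : (j+1)*j = j*(j-1) + 2*j := by
    rcases j with _ | m
    · simp
    · simp only [Nat.succ_sub_one]; ring
  omega

lemma tri_mono {a b : ℕ} (h : a ≤ b) : a*(a-1)/2 ≤ b*(b-1)/2 :=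
  Nat.div_le_div_right (Nat.mul_le_mul h (by omega))

lemma codeN_lt' {t r i j : ℕ} (hij : i < j) (hj : j < t) (h2 : t*t ≤ 2*r) :
    j*(j-1)/2 + i < r := by
  have hA := two_mul_tri j
  have e1 : j*j + 2*j + 1 = (j+1)*(j+1) := by ring
  have e2 : j * (j-1) + j = j*j := by
    rcases j with _ | m
    · simp
    · simp only [Nat.succ_sub_one]; ring
  have g1 : (j+1)*(j+1) ≤ t*t := Nat.mul_le_mul hj hj
  omega

lemma codeN_lt {t r : ℕ} {i j : ℕ} (hij : i ≠ j) (hi : i < t) (hj : j < t)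
    (h2 : t*t ≤ 2*r) : codeN i j < r := by
  rcases Nat.lt_or_ge i j with h | h
  · have : codeN i j = j*(j-1)/2 + i := by
      simp [codeN, Nat.max_eq_right h.le, Nat.min_eq_left h.le]
    rw [this]; exact codeN_lt' h hj h2
  · have hji : j < i := lt_of_le_of_ne h (Ne.symm hij)
    have : codeN i j = i*(i-1)/2 + j := by
      simp [codeN, Nat.max_eq_left h, Nat.min_eq_right h]
    rw [this]; exact codeN_lt' hji hi h2

lemma codeN_inj' {i j i' j' : ℕ} (h1 : i < j) (h2 : i' < j')
    (he : j*(j-1)/2 + i = j'*(j'-1)/2 + i') : i = i' ∧ j = j' := by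
  rcases lt_trichotomy j j' with h | h | h
  · exfalso
    have : (j+1)*j/2 ≤ j'*(j'-1)/2 := by
      have := tri_mono (a := j+1) (b := j') h
      simpa using this
    have := tri_add j
    omega
  · subst h; omega
  · exfalso
    have : (j'+1)*j'/2 ≤ j*(j-1)/2 := by
      have := tri_mono (a := j'+1) (b := j) h
      simpa using this
    have := tri_add j'
    omega

lemma codeN_inj {i j i' j' : ℕ} (h1 : i ≠ j) (h2 : i' ≠ j')
    (he : codeN i j = codeN i' j') : (i = i' ∧ j = j') ∨ (i = j' ∧ j = i') := by
  rcases Nat.lt_or_ge i j with h | h <;> rcases Nat.lt_or_ge i' j' with h' | h'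
  · have e : codeN i j = j*(j-1)/2 + i := by
      simp [codeN, Nat.max_eq_right h.le, Nat.min_eq_left h.le]
    have e' : codeN i' j' = j'*(j'-1)/2 + i' := by
      simp [codeN, Nat.max_eq_right h'.le, Nat.min_eq_left h'.le]
    have := codeN_inj' h h' (by omega)
    exact Or.inl ⟨this.1, this.2⟩
  · have hji' : j' < i' := lt_of_le_of_ne h' (Ne.symm h2)
    have e : codeN i j = j*(j-1)/2 + i := by
      simp [codeN, Nat.max_eq_right h.le, Nat.min_eq_left h.le]
    have e' : codeN i' j' = i'*(i'-1)/2 + j' := by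
      simp [codeN, Nat.max_eq_left h', Nat.min_eq_right h']
    have := codeN_inj' h hji' (by omega)
    exact Or.inr ⟨this.1, this.2⟩
  · have hji : j < i := lt_of_le_of_ne h (Ne.symm h1)
    have e : codeN i j = i*(i-1)/2 + j := by
      simp [codeN, Nat.max_eq_left h, Nat.min_eq_right h]
    have e' : codeN i' j' = j'*(j'-1)/2 + i' := by
      simp [codeN, Nat.max_eq_right h'.le, Nat.min_eq_left h'.le]
    have := codeN_inj' hji h' (by omega)
    exact Or.inr ⟨this.2, this.1⟩
  · have hji : j < i := lt_of_le_of_ne h (Ne.symm h1)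
    have hji' : j' < i' := lt_of_le_of_ne h' (Ne.symm h2)
    have e : codeN i j = i*(i-1)/2 + j := by
      simp [codeN, Nat.max_eq_left h, Nat.min_eq_right h]
    have e' : codeN i' j' = i'*(i'-1)/2 + j' := by
      simp [codeN, Nat.max_eq_left h', Nat.min_eq_right h']
    have := codeN_inj' hji hji' (by omega)
    exact Or.inl ⟨this.2, this.1⟩

/-- A connected graph on a finite vertex type has at least `|V| - 1` edges. -/
lemma conn_card_le {V : Type*} [Fintype V] (G : SimpleGraph V) (hc : G.Connected) :
    Fintype.card V ≤ Nat.card G.edgeSet + 1 := by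
  classical
  obtain ⟨v0⟩ := hc.nonempty
  have key : ∀ v : V, v ≠ v0 → ∃ u, G.Adj u v ∧ G.dist v0 u < G.dist v0 v := by
    intro v hv
    obtain ⟨p, hp⟩ := (hc.preconnected v0 v).exists_walk_length_eq_dist
    have hnn : ¬ p.reverse.Nil := SimpleGraph.Walk.not_nil_of_ne hv
    obtain ⟨u, hadj, q, hq⟩ := SimpleGraph.Walk.not_nil_iff.mp hnn
    have hlen : q.length + 1 = p.length := by
      have := congrArg SimpleGraph.Walk.length hq
      simpa [SimpleGraph.Walk.length_reverse] using this.symm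
    have hd : 0 < G.dist v0 v := hc.pos_dist_of_ne (Ne.symm hv)
    have hdu : G.dist v0 u ≤ q.length := by
      have := SimpleGraph.dist_le q.reverse
      simpa [SimpleGraph.Walk.length_reverse] using this
    exact ⟨u, hadj.symm, by omega⟩
  let F : {v : V // v ≠ v0} → G.edgeSet := fun v =>
    ⟨s((key v.1 v.2).choose, v.1),
      (G.mem_edgeSet).mpr (key v.1 v.2).choose_spec.1⟩
  have hFinj : Function.Injective F := by
    intro v w h
    have h' : s((key v.1 v.2).choose, v.1) = s((key w.1 w.2).choose, w.1) :=
      congrArg Subtype.val h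
    rw [Sym2.eq_iff] at h'
    rcases h' with ⟨_, h2⟩ | ⟨h1, h2⟩
    · exact Subtype.ext h2
    · exfalso
      have d1 := (key v.1 v.2).choose_spec.2
      have d2 := (key w.1 w.2).choose_spec.2
      rw [h1] at d1
      rw [← h2] at d2
      omega
  have hcard : Fintype.card {v : V // v ≠ v0} ≤ Nat.card G.edgeSet := by
    rw [← Nat.card_eq_fintype_card]
    exact Nat.card_le_card_of_injective F hFinj
  have : Fintype.card {v : V // v ≠ v0} = Fintype.card V - 1 := by
    simp [Fintype.card_subtype_compl, Fintype.card_subtype_eq]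
  have hpos : 0 < Fintype.card V := Fintype.card_pos_iff.mpr ⟨v0⟩
  omega

theorem stmt_17 (n r s k : ℕ) (hn : 2 ≤ n) (hr : 1 ≤ r) :
    ∃ f : Sym2 (Fin n) → Fin r,
      ∀ H : (⊤ : SimpleGraph (Fin n)).Subgraph, H.Connected →
        (∃ C : Finset (Fin r), C.card ≤ s ∧ ∀ e ∈ H.edgeSet, f e ∈ C) →
        Nat.card H.verts ≤
          (s + 1) * ((n + Nat.sqrt (2 * r) - 1) / Nat.sqrt (2 * r)) := by
  classical
  set t := Nat.sqrt (2 * r) with htdef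
  have ht0 : 0 < t := Nat.sqrt_pos.mpr (by omega)
  have ht2 : t * t ≤ 2 * r := Nat.sqrt_le (2 * r)
  set q := (n + t - 1) / t with hqdef
  have hdm : t * q + (n + t - 1) % t = n + t - 1 := by
    rw [hqdef]; exact Nat.div_add_mod _ _
  have hmlt : (n + t - 1) % t < t := Nat.mod_lt _ ht0
  have hq0 : 0 < q := by
    rw [hqdef]; exact (Nat.one_le_div_iff ht0).mpr (by omega)
  have hnq : n ≤ t * q := by omega
  have hblk : ∀ v : Fin n, v.1 / q < t := by
    intro v
    rw [Nat.div_lt_iff_lt_mul hq0]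
    exact lt_of_lt_of_le v.2 hnq
  set blk : Fin n → Fin t := fun v => ⟨v.1 / q, hblk v⟩ with hblkdef
  have hcode : ∀ a b : Fin t, a ≠ b → codeN a.1 b.1 < r := by
    intro a b hab
    exact codeN_lt (fun h => hab (Fin.ext h)) a.2 b.2 ht2
  set g : Fin n → Fin n → Fin r := fun u v =>
    if h : blk u = blk v then ⟨0, hr⟩ else ⟨codeN (blk u).1 (blk v).1, hcode _ _ h⟩
    with hgdef
  have hgsymm : ∀ u v, g u v = g v u := by
    intro u v
    by_cases h : blk u = blk v
    · simp [hgdef, h]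
    · rw [hgdef]
      simp only [dif_neg h, dif_neg (Ne.symm h)]
      exact Fin.ext (codeN_comm _ _)
  refine ⟨Sym2.lift ⟨g, hgsymm⟩, ?_⟩
  rintro H hconn ⟨C, hCcard, hfC⟩
  -- the set of blocks hit by H
  set B : Finset (Fin t) :=
    Finset.univ.filter (fun b : Fin t => ∃ v : Fin n, v ∈ H.verts ∧ blk v = b) with hBdef
  have hmemB : ∀ v : Fin n, v ∈ H.verts → blk v ∈ B := by
    intro v hv
    simp only [hBdef, Finset.mem_filter, Finset.mem_univ, true_and]
    exact ⟨v, hv, rfl⟩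
  -- block graph
  set Gb : SimpleGraph {x : Fin t // x ∈ B} :=
    { Adj := fun a b => a ≠ b ∧ ∃ u v : Fin n, u ∈ H.verts ∧ v ∈ H.verts ∧
        H.Adj u v ∧ blk u = a.1 ∧ blk v = b.1,
      symm := ⟨by
        rintro a b ⟨hne, u, v, hu, hv, hadj, h1, h2⟩
        exact ⟨Ne.symm hne, v, u, hv, hu, hadj.symm, h2, h1⟩⟩,
      loopless := ⟨fun a h => h.1 rfl⟩ } with hGbdef
  let ψ : H.verts → {x : Fin t // x ∈ B} := fun v => ⟨blk v.1, hmemB v.1 v.2⟩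
  have step : ∀ (u v : H.verts) (_ : H.coe.Walk u v), Gb.Reachable (ψ u) (ψ v) := by
    intro u v w
    induction w with
    | nil => exact SimpleGraph.Reachable.refl _
    | @cons a b c h p ih =>
      refine SimpleGraph.Reachable.trans ?_ ih
      by_cases he : ψ a = ψ b
      · rw [he]
      · refine SimpleGraph.Adj.reachable ?_
        refine ⟨he, a.1, b.1, a.2, b.2, ?_, rfl, rfl⟩
        exact (SimpleGraph.Subgraph.coe_adj H a b).mp h
  have hGbconn : Gb.Connected := by
    rw [SimpleGraph.connected_iff]
    constructor
    · intro a b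
      obtain ⟨va, hva, ha⟩ : ∃ v : Fin n, v ∈ H.verts ∧ blk v = a.1 := by
        have := a.2; simp only [hBdef, Finset.mem_filter] at this; exact this.2
      obtain ⟨vb, hvb, hb⟩ : ∃ v : Fin n, v ∈ H.verts ∧ blk v = b.1 := by
        have := b.2; simp only [hBdef, Finset.mem_filter] at this; exact this.2
      obtain ⟨w⟩ := hconn.coe.preconnected ⟨va, hva⟩ ⟨vb, hvb⟩
      have := step ⟨va, hva⟩ ⟨vb, hvb⟩ w
      have ea : ψ ⟨va, hva⟩ = a := Subtype.ext ha
      have eb : ψ ⟨vb, hvb⟩ = b := Subtype.ext hb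
      rwa [ea, eb] at this
    · obtain ⟨v0, hv0⟩ := hconn.nonempty
      exact ⟨ψ ⟨v0, hv0⟩⟩
  -- count edges of Gb by colours
  set g2 : {x : Fin t // x ∈ B} → {x : Fin t // x ∈ B} → Fin r := fun a b =>
    if h : a.1 = b.1 then ⟨0, hr⟩ else ⟨codeN a.1.1 b.1.1, hcode _ _ h⟩ with hg2def
  have hg2symm : ∀ a b, g2 a b = g2 b a := by
    intro a b
    by_cases h : a.1 = b.1
    · simp [hg2def, h, Subtype.ext h]
    · rw [hg2def]
      simp only [dif_neg h, dif_neg (Ne.symm h)]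
      exact Fin.ext (codeN_comm _ _)
  set G2 : Sym2 {x : Fin t // x ∈ B} → Fin r := Sym2.lift ⟨g2, hg2symm⟩ with hG2def
  have hmaps : ∀ ε ∈ Gb.edgeSet, G2 ε ∈ (↑C : Set (Fin r)) := by
    intro ε hε
    induction ε using Sym2.ind with
    | _ a b =>
      rw [SimpleGraph.mem_edgeSet] at hε
      obtain ⟨hne, u, v, hu, hv, hadj, h1, h2⟩ := hε
      have hne' : a.1 ≠ b.1 := fun h => hne (Subtype.ext h)
      have hblkne : blk u ≠ blk v := by rw [h1, h2]; exact hne'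
      have hmem : s(u, v) ∈ H.edgeSet := SimpleGraph.Subgraph.mem_edgeSet.mpr hadj
      have := hfC _ hmem
      have hv1 : (blk u).1 = (a.1 : ℕ) := congrArg Fin.val h1
      have hv2 : (blk v).1 = (b.1 : ℕ) := congrArg Fin.val h2
      have e1 : g u v = ⟨codeN (blk u).1 (blk v).1, hcode _ _ hblkne⟩ := dif_neg hblkne
      have e2 : g2 a b = ⟨codeN a.1.1 b.1.1, hcode _ _ hne'⟩ := dif_neg hne'
      have heq : Sym2.lift ⟨g, hgsymm⟩ s(u, v) = G2 s(a, b) := by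
        show g u v = g2 a b
        rw [e1, e2]
        exact Fin.ext (by show codeN (blk u).1 (blk v).1 = codeN a.1.1 b.1.1; rw [hv1, hv2])
      rw [heq] at this
      exact this
  have hinj : Set.InjOn G2 Gb.edgeSet := by
    intro ε hε ε' hε' h
    induction ε using Sym2.ind with
    | _ a b =>
    induction ε' using Sym2.ind with
    | _ a' b' =>
      rw [SimpleGraph.mem_edgeSet] at hε hε'
      have hne : a.1 ≠ b.1 := fun h => hε.1 (Subtype.ext h)
      have hne' : a'.1 ≠ b'.1 := fun h => hε'.1 (Subtype.ext h)
      have hval : codeN a.1.1 b.1.1 = codeN a'.1.1 b'.1.1 := by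
        have hg : g2 a b = g2 a' b' := h
        have e1 : g2 a b = ⟨codeN a.1.1 b.1.1, hcode _ _ hne⟩ := dif_neg hne
        have e2 : g2 a' b' = ⟨codeN a'.1.1 b'.1.1, hcode _ _ hne'⟩ := dif_neg hne'
        rw [e1, e2] at hg
        exact congrArg Fin.val hg
      have hvne : a.1.1 ≠ b.1.1 := fun h => hne (Fin.ext h)
      have hvne' : a'.1.1 ≠ b'.1.1 := fun h => hne' (Fin.ext h)
      rcases codeN_inj hvne hvne' hval with ⟨e1, e2⟩ | ⟨e1, e2⟩
      · have : a = a' := Subtype.ext (Fin.ext e1)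
        have hb : b = b' := Subtype.ext (Fin.ext e2)
        rw [this, hb]
      · have : a = b' := Subtype.ext (Fin.ext e1)
        have hb : b = a' := Subtype.ext (Fin.ext e2)
        rw [this, hb, Sym2.eq_swap]
  have hE : Nat.card Gb.edgeSet ≤ C.card := by
    rw [Nat.card_coe_set_eq]
    have := Set.ncard_le_ncard_of_injOn G2 hmaps hinj (C.finite_toSet)
    simpa [Set.ncard_coe_finset] using this
  have hB : B.card ≤ s + 1 := by
    have h1 : Fintype.card {x : Fin t // x ∈ B} ≤ Nat.card Gb.edgeSet + 1 :=
      conn_card_le Gb hGbconn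
    have h2 : B.card = Fintype.card {x : Fin t // x ∈ B} := (Fintype.card_coe B).symm
    omega
  -- count vertices
  have hfib : ∀ b : Fin t, (Finset.univ.filter (fun v : Fin n => blk v = b)).card ≤ q := by
    intro b
    have : (Finset.univ.filter (fun v : Fin n => blk v = b)).card ≤ (Finset.range q).card := by
      apply Finset.card_le_card_of_injOn (fun v => v.1 % q)
      · intro v _
        exact Finset.mem_range.mpr (Nat.mod_lt _ hq0)
      · intro v hv w hw hmod
        have hmod' : v.1 % q = w.1 % q := hmod
        simp only [Finset.mem_coe, Finset.mem_filter] at hv hw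
        have hv' : v.1 / q = b.1 := congrArg Fin.val hv.2
        have hw' : w.1 / q = b.1 := congrArg Fin.val hw.2
        have d1 : q * b.1 + v.1 % q = v.1 := by rw [← hv']; exact Nat.div_add_mod v.1 q
        have d2 : q * b.1 + w.1 % q = w.1 := by rw [← hw']; exact Nat.div_add_mod w.1 q
        exact Fin.ext (by omega)
    simpa using this
  have hsub : H.verts.toFinset ⊆
      B.biUnion (fun b => Finset.univ.filter (fun v : Fin n => blk v = b)) := by
    intro v hv
    rw [Set.mem_toFinset] at hv
    exact Finset.mem_biUnion.mpr ⟨blk v, hmemB v hv, by simp⟩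
  have hcount : Nat.card H.verts ≤ B.card * q := by
    have h1 : Nat.card H.verts = H.verts.toFinset.card := by
      rw [Nat.card_coe_set_eq]; exact Set.ncard_eq_toFinset_card' _
    rw [h1]
    calc H.verts.toFinset.card
        ≤ (B.biUnion (fun b => Finset.univ.filter (fun v : Fin n => blk v = b))).card :=
          Finset.card_le_card hsub
      _ ≤ ∑ b ∈ B, (Finset.univ.filter (fun v : Fin n => blk v = b)).card :=
          Finset.card_biUnion_le
      _ ≤ ∑ _b ∈ B, q := Finset.sum_le_sum (fun b _ => hfib b)
      _ = B.card * q := by rw [Finset.sum_const, smul_eq_mul]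
  calc Nat.card H.verts ≤ B.card * q := hcount
    _ ≤ (s + 1) * q := Nat.mul_le_mul_right q hB
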